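/- Let 1 ≤ p < ∞ and let A : [0,1) → (0,1/2) be decreasing with A(r) → 0 as r → 1⁻. Then there exists a 2π-periodic function f ∈ L^p([−π,π]) such that, with u_r(θ) = P[f](re^{iθ}), one has ‖u_r − f‖_p ≥ A(r) for all 0 ≤ r < 1; that is, the L^p convergence of the Poisson integral to its boundary function can be arbitrarily slow. -/

import Mathlib

open Real Filter MeasureTheory Set Topology
open scoped ENNReal NNReal

noncomputable section

/-- The Poisson kernel for the unit disc. -/
def poissonKernelDisc (r θ : ℝ) : ℝ :=
  (1 - r ^ 2) / (2 * π * (1 - 2 * r * Real.cos θ + r ^ 2))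

/-- The Poisson integral of an integrable `f`, evaluated at the point `r e^{iθ}`. -/
def poissonIntegral (f : ℝ → ℝ) (r θ : ℝ) : ℝ :=
  ∫ φ in (-π)..π, f φ * poissonKernelDisc r (φ - θ)

/-- The Alexiewicz norm over the circle: the supremum of `|∫_I g|` over intervals `I`
of length at most `2π`. -/
def alexNorm (g : ℝ → ℝ) : ℝ :=
  sSup {v | ∃ a b : ℝ, a ≤ b ∧ b - a ≤ 2 * π ∧ v = |∫ x in a..b, g x|}

/-- The `L^p` norm on `[-π,π]`. -/
def lpNorm (p : ℝ) (g : ℝ → ℝ) : ℝ :=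
  (∫ θ in (-π)..π, |g θ| ^ p) ^ (1 / p)


lemma denom_pos {r : ℝ} (h0 : 0 ≤ r) (h1 : r < 1) (ψ : ℝ) :
    0 < 1 - 2 * r * Real.cos ψ + r ^ 2 := by
  nlinarith [Real.cos_le_one ψ, Real.neg_one_le_cos ψ, sq_nonneg (1 - r), sq_nonneg (1 + r)]

lemma kernel_series {r : ℝ} (h0 : 0 ≤ r) (h1 : r < 1) (ψ : ℝ) :
    2 * π * poissonKernelDisc r ψ = 1 + 2 * ∑' m : ℕ, r ^ (m + 1) * Real.cos ((m + 1 : ℕ) * ψ) := by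
  set w : ℂ := (r : ℂ) * Complex.exp (ψ * Complex.I) with hw_def
  have hw : ‖w‖ = r := by
    rw [hw_def, norm_mul, Complex.norm_exp]
    simp [abs_of_nonneg h0]
  have hw1 : ‖w‖ < 1 := by rw [hw]; exact h1
  have hwne : (1 : ℂ) - w ≠ 0 := by
    intro h
    have : w = 1 := by linear_combination -h
    rw [this] at hw1; simp at hw1
  have hgeo : Summable (fun m : ℕ => w ^ m) := summable_geometric_of_norm_lt_one hw1
  have hsum : Summable (fun m : ℕ => w ^ (m + 1)) := by
    simpa [pow_succ'] using hgeo.mul_left w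
  have htsum : ∑' m : ℕ, w ^ (m + 1) = w / (1 - w) := by
    have : ∑' m : ℕ, w ^ (m + 1) = w * ∑' m : ℕ, w ^ m := by
      rw [← tsum_mul_left]; congr 1; ext m; rw [pow_succ']
    rw [this, tsum_geometric_of_norm_lt_one hw1]
    field_simp
  have key : (1 : ℂ) + 2 * ∑' m : ℕ, w ^ (m + 1) = (1 + w) / (1 - w) := by
    rw [htsum]; field_simp; ring
  -- real parts
  have hre_pow : ∀ m : ℕ, (w ^ (m + 1)).re = r ^ (m + 1) * Real.cos ((m + 1 : ℕ) * ψ) := by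
    intro m
    rw [hw_def, mul_pow, ← Complex.exp_nat_mul,
      show ((m + 1 : ℕ) : ℂ) * ((ψ : ℂ) * Complex.I) = ((((m + 1 : ℕ) : ℝ) * ψ : ℝ) : ℂ) * Complex.I by
        push_cast; ring, ← Complex.ofReal_pow]
    simp only [Complex.mul_re, Complex.ofReal_re, Complex.ofReal_im, zero_mul, sub_zero,
      Complex.exp_ofReal_mul_I_re]
  have hre_lhs : ((1 : ℂ) + 2 * ∑' m : ℕ, w ^ (m + 1)).re
      = 1 + 2 * ∑' m : ℕ, r ^ (m + 1) * Real.cos ((m + 1 : ℕ) * ψ) := by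
    rw [Complex.add_re, Complex.one_re,
      show ((2 : ℂ)) = (((2 : ℝ)) : ℂ) by norm_num, Complex.re_ofReal_mul,
      Complex.re_tsum hsum]
    simp_rw [hre_pow]
  have hwre : w.re = r * Real.cos ψ := by
    simp [hw_def, Complex.mul_re, Complex.exp_ofReal_mul_I_re]
  have hwim : w.im = r * Real.sin ψ := by
    simp [hw_def, Complex.mul_im, Complex.exp_ofReal_mul_I_im]
  have hre_rhs : (((1 : ℂ) + w) / (1 - w)).re
      = (1 - r ^ 2) / (1 - 2 * r * Real.cos ψ + r ^ 2) := by
    rw [Complex.div_re]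
    have hnsq : Complex.normSq (1 - w) = 1 - 2 * r * Real.cos ψ + r ^ 2 := by
      rw [Complex.normSq_apply]
      simp only [Complex.sub_re, Complex.sub_im, Complex.one_re, Complex.one_im, hwre, hwim]
      nlinarith [Real.sin_sq_add_cos_sq ψ]
    rw [hnsq, ← add_div]
    congr 1
    simp only [Complex.add_re, Complex.add_im, Complex.sub_re, Complex.sub_im, Complex.one_re,
      Complex.one_im, hwre, hwim]
    nlinarith [Real.sin_sq_add_cos_sq ψ]
  have := congrArg Complex.re key
  rw [hre_lhs, hre_rhs] at this
  rw [this]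
  unfold poissonKernelDisc
  have hd := denom_pos h0 h1 ψ
  rw [eq_div_iff hd.ne']
  field_simp

lemma integral_cos_int_mul {c : ℤ} (hc : c ≠ 0) :
    ∫ ψ in (-π)..π, Real.cos (c * ψ) = 0 := by
  have hc' : (c : ℝ) ≠ 0 := Int.cast_ne_zero.mpr hc
  have h : ∀ ψ : ℝ, HasDerivAt (fun t => Real.sin (c * t) / c) (Real.cos (c * ψ)) ψ := by
    intro ψ
    have h1 : HasDerivAt (fun t : ℝ => (c : ℝ) * t) (c : ℝ) ψ := by
      simpa using (hasDerivAt_id ψ).const_mul (c : ℝ)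
    have h2 := (Real.hasDerivAt_sin ((c : ℝ) * ψ)).comp ψ h1
    have h3 := h2.div_const (c : ℝ)
    exact h3.congr_deriv (mul_div_cancel_right₀ _ hc')
  rw [intervalIntegral.integral_eq_sub_of_hasDerivAt (fun ψ _ => h ψ)
    ((Real.continuous_cos.comp (continuous_const.mul continuous_id)).intervalIntegrable _ _)]
  have h1 : Real.sin ((c : ℝ) * π) = 0 := Real.sin_int_mul_pi c
  have h2 : Real.sin ((c : ℝ) * (-π)) = 0 := by
    rw [mul_neg, Real.sin_neg, h1, neg_zero]
  rw [h1, h2]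
  simp

lemma integral_cos_nat_mul (n : ℕ) :
    ∫ ψ in (-π)..π, Real.cos (n * ψ) = if n = 0 then 2 * π else 0 := by
  by_cases hn : n = 0
  · subst hn; simp; ring
  · rw [if_neg hn]
    have : ((n : ℤ) : ℝ) = (n : ℝ) := by push_cast; rfl
    rw [← this]
    exact integral_cos_int_mul (by exact_mod_cast hn)

lemma integral_cos_mul_cos {a b : ℕ} (ha : a ≠ 0) (hb : b ≠ 0) :
    ∫ ψ in (-π)..π, Real.cos (a * ψ) * Real.cos (b * ψ) = if a = b then π else 0 := by
  have key : ∀ ψ : ℝ, Real.cos (a * ψ) * Real.cos (b * ψ)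
      = (Real.cos ((((a : ℤ) - b : ℤ) : ℝ) * ψ) + Real.cos ((((a : ℤ) + b : ℤ) : ℝ) * ψ)) / 2 := by
    intro ψ
    push_cast
    rw [sub_mul, add_mul, Real.cos_sub, Real.cos_add]
    ring
  simp_rw [key]
  have hint : ∀ c : ℝ, IntervalIntegrable (fun ψ => Real.cos (c * ψ)) volume (-π) π :=
    fun c => (Real.continuous_cos.comp (continuous_const.mul continuous_id)).intervalIntegrable _ _
  rw [intervalIntegral.integral_div, intervalIntegral.integral_add (hint _) (hint _)]
  by_cases hab : a = b
  · subst hab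
    rw [if_pos rfl]
    have h1 : (((a : ℤ) - a : ℤ) : ℝ) = 0 := by push_cast; ring
    have h2 : ∫ ψ in (-π)..π, Real.cos ((((a : ℤ) - a : ℤ) : ℝ) * ψ) = 2 * π := by
      rw [h1]; simp; ring
    rw [h2, integral_cos_int_mul (by positivity : ((a : ℤ) + a : ℤ) ≠ 0)]
    ring
  · rw [if_neg hab, integral_cos_int_mul (sub_ne_zero.mpr (by exact_mod_cast hab)),
      integral_cos_int_mul (by positivity : ((a : ℤ) + b : ℤ) ≠ 0)]
    ring

lemma kernel_continuous {r : ℝ} (h0 : 0 ≤ r) (h1 : r < 1) :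
    Continuous (poissonKernelDisc r) := by
  apply continuous_const.div (by continuity)
  intro ψ
  have := denom_pos h0 h1 ψ
  positivity

lemma kernel_fourier {r : ℝ} (h0 : 0 ≤ r) (h1 : r < 1) (n : ℕ) :
    ∫ ψ in (-π)..π, Real.cos (n * ψ) * poissonKernelDisc r ψ = r ^ n := by
  have hccos : ∀ c : ℝ, Continuous fun ψ : ℝ => Real.cos (c * ψ) :=
    fun c => Real.continuous_cos.comp (continuous_const.mul continuous_id)
  set g : ℕ → ℝ → ℝ := fun m ψ => Real.cos (n * ψ) * (r ^ (m + 1) * Real.cos ((m + 1 : ℕ) * ψ))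
    with hg_def
  have hcont_g : ∀ m, Continuous (g m) := by
    intro m; exact (hccos n).mul (continuous_const.mul (hccos _))
  -- pointwise identity
  have hpt : ∀ ψ, Real.cos (n * ψ) * poissonKernelDisc r ψ
      = (1 / (2 * π)) * Real.cos (n * ψ) + (1 / π) * ∑' m, g m ψ := by
    intro ψ
    have h := kernel_series h0 h1 ψ
    have h2 : ∑' m, g m ψ = Real.cos (n * ψ) * ∑' m : ℕ, r ^ (m + 1) * Real.cos ((m + 1 : ℕ) * ψ) :=
      tsum_mul_left
    have hpk : poissonKernelDisc r ψ
        = (1 + 2 * ∑' m : ℕ, r ^ (m + 1) * Real.cos ((m + 1 : ℕ) * ψ)) / (2 * π) := by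
      rw [← h]; field_simp
    rw [hpk, h2]
    field_simp
  simp_rw [hpt]
  have hpi := pi_pos
  have hle : (-π : ℝ) ≤ π := by linarith
  -- continuity of the tsum function
  have htsum_eq : (fun ψ => ∑' m, g m ψ)
      = fun ψ => Real.cos (n * ψ) * (2 * π * poissonKernelDisc r ψ - 1) / 2 := by
    funext ψ
    rw [kernel_series h0 h1 ψ, tsum_mul_left]
    ring
  have htsum_cont : Continuous (fun ψ => ∑' m, g m ψ) := by
    rw [htsum_eq]
    exact (Continuous.mul (hccos n)
      (((continuous_const.mul (kernel_continuous h0 h1)).sub continuous_const))).div_const 2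
  -- split the integral
  rw [intervalIntegral.integral_add (f := fun ψ => 1 / (2 * π) * Real.cos (n * ψ))
      (g := fun ψ => 1 / π * ∑' m, g m ψ)
      ((continuous_const.mul (hccos n)).intervalIntegrable _ _)
      ((continuous_const.mul htsum_cont).intervalIntegrable _ _),
    intervalIntegral.integral_const_mul, intervalIntegral.integral_const_mul,
    integral_cos_nat_mul n]
  -- interchange sum and integral
  have hswap : ∫ ψ in (-π)..π, ∑' m, g m ψ = ∑' m, ∫ ψ in (-π)..π, g m ψ := by
    rw [intervalIntegral.integral_of_le hle]
    have hmeas : ∀ m, AEStronglyMeasurable (g m) (volume.restrict (Ioc (-π) π)) :=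
      fun m => (hcont_g m).aestronglyMeasurable
    -- the lintegral bound
    have hbd : ∀ m, ∫⁻ ψ in Ioc (-π) π, ‖g m ψ‖₊ ∂volume
        ≤ ENNReal.ofReal (r ^ (m + 1) * (2 * π)) := by
      intro m
      have hptb : ∀ ψ : ℝ, (‖g m ψ‖₊ : ℝ≥0∞) ≤ ENNReal.ofReal (r ^ (m + 1)) := by
        intro ψ
        rw [show ∀ y : ℝ, (‖y‖₊ : ℝ≥0∞) = ENNReal.ofReal ‖y‖ from fun y => (ofReal_norm y).symm]
        apply ENNReal.ofReal_le_ofReal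
        have : ‖g m ψ‖ = |Real.cos (n * ψ)| * (r ^ (m + 1) * |Real.cos ((m + 1 : ℕ) * ψ)|) := by
          rw [hg_def]
          simp only [Real.norm_eq_abs, abs_mul, abs_of_nonneg (pow_nonneg h0 (m + 1))]
        rw [this]
        calc |Real.cos (n * ψ)| * (r ^ (m + 1) * |Real.cos ((m + 1 : ℕ) * ψ)|)
            ≤ 1 * (r ^ (m + 1) * 1) := by
              gcongr
              · exact Real.abs_cos_le_one _
              · exact Real.abs_cos_le_one _
          _ = r ^ (m + 1) := by ring
      calc ∫⁻ ψ in Ioc (-π) π, ‖g m ψ‖₊ ∂volume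
          ≤ ∫⁻ _ in Ioc (-π) π, ENNReal.ofReal (r ^ (m + 1)) ∂volume :=
            lintegral_mono fun ψ => hptb ψ
        _ = ENNReal.ofReal (r ^ (m + 1)) * volume (Ioc (-π) π) := by
            rw [MeasureTheory.setLIntegral_const]
        _ = ENNReal.ofReal (r ^ (m + 1) * (2 * π)) := by
            rw [Real.volume_Ioc, ENNReal.ofReal_mul (pow_nonneg h0 _)]
            congr 1
            ring_nf
    have hfin : ∑' m, ∫⁻ ψ in Ioc (-π) π, ‖g m ψ‖₊ ∂volume ≠ ⊤ := by
      refine ne_top_of_le_ne_top ?_ (ENNReal.tsum_le_tsum hbd)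
      have hsummable : Summable (fun m : ℕ => r ^ (m + 1) * (2 * π)) := by
        apply Summable.mul_right
        exact (summable_geometric_of_lt_one h0 h1).comp_injective (add_left_injective 1)
      rw [← ENNReal.ofReal_tsum_of_nonneg (fun m => by positivity) hsummable]
      exact ENNReal.ofReal_ne_top
    rw [MeasureTheory.integral_tsum hmeas hfin]
    simp_rw [intervalIntegral.integral_of_le hle]
  rw [hswap]
  -- compute each term
  have hterm : ∀ m : ℕ, ∫ ψ in (-π)..π, g m ψ
      = r ^ (m + 1) * (if n = m + 1 then π else 0) := by
    intro m
    by_cases hn : n = 0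
    · subst hn
      have : ∀ ψ : ℝ, g m ψ = r ^ (m + 1) * Real.cos ((m + 1 : ℕ) * ψ) := by
        intro ψ; rw [hg_def]; simp
      simp_rw [this]
      rw [intervalIntegral.integral_const_mul, integral_cos_nat_mul (m + 1)]
      simp
    · have : ∀ ψ : ℝ, g m ψ = r ^ (m + 1) * (Real.cos (n * ψ) * Real.cos ((m + 1 : ℕ) * ψ)) := by
        intro ψ; rw [hg_def]; ring
      simp_rw [this]
      rw [intervalIntegral.integral_const_mul, integral_cos_mul_cos hn (Nat.succ_ne_zero m)]
  simp_rw [hterm]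
  by_cases hn : n = 0
  · subst hn
    rw [if_pos rfl]
    have : ∀ m : ℕ, r ^ (m + 1) * (if 0 = m + 1 then π else 0) = 0 := by
      intro m; rw [if_neg (by omega)]; ring
    simp_rw [this, tsum_zero]
    field_simp
    ring
  · rw [if_neg hn]
    obtain ⟨k, rfl⟩ : ∃ k, n = k + 1 := ⟨n - 1, by omega⟩
    have htsum_single : ∑' m : ℕ, r ^ (m + 1) * (if k + 1 = m + 1 then π else 0)
        = r ^ (k + 1) * π := by
      rw [tsum_eq_single k]
      · rw [if_pos rfl]
      · intro m hm
        rw [if_neg (by omega)]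
        ring
    rw [htsum_single]
    field_simp
    ring

lemma integral_odd_zero {F : ℝ → ℝ} (hF : Continuous F) (hodd : ∀ x, F (-x) = -F x) (a : ℝ) :
    ∫ x in (-a)..a, F x = 0 := by
  have h2 : ∫ x in (-a)..(0:ℝ), F (-x) = ∫ x in (0:ℝ)..a, F x := by
    simpa using intervalIntegral.integral_comp_neg (a := -a) (b := 0) F
  have h1 : ∫ x in (-a)..(0:ℝ), F x = - ∫ x in (0:ℝ)..a, F x := by
    rw [← h2]
    have : ∀ x : ℝ, F x = -F (-x) := fun x => by rw [hodd, neg_neg]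
    rw [show (fun x => F x) = fun x => -F (-x) from funext this]
    rw [intervalIntegral.integral_neg]
  have := intervalIntegral.integral_add_adjacent_intervals (μ := volume)
    (hF.intervalIntegrable (-a) 0) (hF.intervalIntegrable 0 a)
  rw [← this, h1]
  ring

lemma kernel_periodic (r : ℝ) : Function.Periodic (poissonKernelDisc r) (2 * π) := by
  intro ψ
  unfold poissonKernelDisc
  rw [Real.cos_add_two_pi]

lemma kernel_even (r : ℝ) (ψ : ℝ) : poissonKernelDisc r (-ψ) = poissonKernelDisc r ψ := by
  unfold poissonKernelDisc
  rw [Real.cos_neg]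

lemma kernel_fourier_shift {r : ℝ} (h0 : 0 ≤ r) (h1 : r < 1) (n : ℕ) (θ : ℝ) :
    ∫ φ in (-π)..π, Real.cos (n * φ) * poissonKernelDisc r (φ - θ) = r ^ n * Real.cos (n * θ) := by
  set H : ℝ → ℝ := fun ψ => Real.cos (n * (ψ + θ)) * poissonKernelDisc r ψ with hH_def
  have hint : (fun φ => Real.cos (n * φ) * poissonKernelDisc r (φ - θ)) = fun φ => H (φ - θ) := by
    funext φ
    rw [hH_def]
    simp only []
    ring_nf
  rw [hint, intervalIntegral.integral_comp_sub_right H θ]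
  have hper : Function.Periodic H (2 * π) := by
    intro ψ
    rw [hH_def]
    simp only []
    rw [show (n : ℝ) * (ψ + 2 * π + θ) = n * (ψ + θ) + (n : ℤ) * (2 * π) by push_cast; ring,
      Real.cos_add_int_mul_two_pi, kernel_periodic r ψ]
  have := hper.intervalIntegral_add_eq (-π - θ) (-π)
  rw [show -π - θ + 2 * π = π - θ by ring, show -π + 2 * π = π by ring] at this
  rw [this]
  have hexp : ∀ ψ : ℝ, H ψ = Real.cos (n * θ) * (Real.cos (n * ψ) * poissonKernelDisc r ψ)
      - Real.sin (n * θ) * (Real.sin (n * ψ) * poissonKernelDisc r ψ) := by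
    intro ψ
    rw [hH_def]
    simp only []
    rw [show (n : ℝ) * (ψ + θ) = n * ψ + n * θ by ring, Real.cos_add]
    ring
  simp_rw [hexp]
  have hccos : Continuous fun ψ : ℝ => Real.cos ((n : ℝ) * ψ) :=
    Real.continuous_cos.comp (continuous_const.mul continuous_id)
  have hcsin : Continuous fun ψ : ℝ => Real.sin ((n : ℝ) * ψ) :=
    Real.continuous_sin.comp (continuous_const.mul continuous_id)
  rw [intervalIntegral.integral_sub
      (f := fun x => Real.cos (n * θ) * (Real.cos (n * x) * poissonKernelDisc r x))
      (g := fun x => Real.sin (n * θ) * (Real.sin (n * x) * poissonKernelDisc r x))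
      ((continuous_const.mul (hccos.mul (kernel_continuous h0 h1))).intervalIntegrable _ _)
      ((continuous_const.mul (hcsin.mul (kernel_continuous h0 h1))).intervalIntegrable _ _),
    intervalIntegral.integral_const_mul, intervalIntegral.integral_const_mul,
    kernel_fourier h0 h1 n]
  have hodd : ∫ ψ in (-π)..π, Real.sin (n * ψ) * poissonKernelDisc r ψ = 0 := by
    apply integral_odd_zero (hcsin.mul (kernel_continuous h0 h1))
    intro x
    show Real.sin (n * -x) * poissonKernelDisc r (-x) = -(Real.sin (n * x) * poissonKernelDisc r x)
    simp only [mul_neg, Real.sin_neg, kernel_even, neg_mul]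
  rw [hodd]
  ring

lemma kernel_bound {r : ℝ} (h0 : 0 ≤ r) (h1 : r < 1) (ψ : ℝ) :
    |poissonKernelDisc r ψ| ≤ (1 - r ^ 2) / (2 * π * (1 - r) ^ 2) := by
  have hd := denom_pos h0 h1 ψ
  have hpi := pi_pos
  have hnum : 0 ≤ 1 - r ^ 2 := by nlinarith
  have habs : |poissonKernelDisc r ψ| = poissonKernelDisc r ψ := by
    rw [abs_of_nonneg]
    unfold poissonKernelDisc
    positivity
  rw [habs]
  unfold poissonKernelDisc
  have hsq : (0:ℝ) < (1 - r) ^ 2 := pow_pos (by linarith) 2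
  gcongr
  nlinarith [Real.cos_le_one ψ]

/-- interchange of tsum and interval integral, given uniform bounds. -/

lemma interval_integral_tsum {g : ℕ → ℝ → ℝ} (hc : ∀ k, Continuous (g k))
    {u : ℕ → ℝ} (hu : Summable u) (hb : ∀ k x, |g k x| ≤ u k) :
    ∫ x in (-π)..π, ∑' k, g k x = ∑' k, ∫ x in (-π)..π, g k x := by
  have hpi := pi_pos
  have hle : (-π : ℝ) ≤ π := by linarith
  have hu0 : ∀ k, 0 ≤ u k := fun k => le_trans (abs_nonneg _) (hb k 0)
  rw [intervalIntegral.integral_of_le hle]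
  have hbd : ∀ k, ∫⁻ x in Ioc (-π) π, ‖g k x‖₊ ∂volume ≤ ENNReal.ofReal (u k * (2 * π)) := by
    intro k
    have hptb : ∀ x : ℝ, (‖g k x‖₊ : ℝ≥0∞) ≤ ENNReal.ofReal (u k) := by
      intro x
      rw [show ∀ y : ℝ, (‖y‖₊ : ℝ≥0∞) = ENNReal.ofReal ‖y‖ from fun y => (ofReal_norm y).symm]
      exact ENNReal.ofReal_le_ofReal (hb k x)
    calc ∫⁻ x in Ioc (-π) π, ‖g k x‖₊ ∂volume
        ≤ ∫⁻ _ in Ioc (-π) π, ENNReal.ofReal (u k) ∂volume := lintegral_mono fun x => hptb x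
      _ = ENNReal.ofReal (u k) * volume (Ioc (-π) π) := by rw [MeasureTheory.setLIntegral_const]
      _ = ENNReal.ofReal (u k * (2 * π)) := by
          rw [Real.volume_Ioc, ENNReal.ofReal_mul (hu0 k)]
          congr 1
          ring_nf
  have hfin : ∑' k, ∫⁻ x in Ioc (-π) π, ‖g k x‖₊ ∂volume ≠ ⊤ := by
    refine ne_top_of_le_ne_top ?_ (ENNReal.tsum_le_tsum hbd)
    rw [← ENNReal.ofReal_tsum_of_nonneg (fun k => mul_nonneg (hu0 k) (by positivity)) (hu.mul_right _)]
    exact ENNReal.ofReal_ne_top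
  rw [MeasureTheory.integral_tsum (fun k => (hc k).aestronglyMeasurable) hfin]
  simp_rw [intervalIntegral.integral_of_le hle]

lemma poisson_tsum {a : ℕ → ℝ} (ha0 : ∀ k, 0 ≤ a k) (ha : Summable a) (n : ℕ → ℕ)
    {r : ℝ} (h0 : 0 ≤ r) (h1 : r < 1) (θ : ℝ) :
    poissonIntegral (fun φ => ∑' k, a k * Real.cos (n k * φ)) r θ
      = ∑' k, a k * r ^ (n k) * Real.cos (n k * θ) := by
  unfold poissonIntegral
  have h1' : ∀ φ : ℝ, (∑' k, a k * Real.cos (n k * φ)) * poissonKernelDisc r (φ - θ)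
      = ∑' k, a k * Real.cos (n k * φ) * poissonKernelDisc r (φ - θ) := fun φ => tsum_mul_right.symm
  simp_rw [h1']
  set M : ℝ := (1 - r ^ 2) / (2 * π * (1 - r) ^ 2) with hM
  have hM0 : 0 ≤ M := le_trans (abs_nonneg _) (kernel_bound h0 h1 0)
  have hswap := interval_integral_tsum
    (g := fun k φ => a k * Real.cos (n k * φ) * poissonKernelDisc r (φ - θ))
    (u := fun k => a k * M) ?_ (ha.mul_right M) ?_
  · rw [hswap]
    apply tsum_congr
    intro k
    have : ∀ φ : ℝ, a k * Real.cos (n k * φ) * poissonKernelDisc r (φ - θ)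
        = a k * (Real.cos (n k * φ) * poissonKernelDisc r (φ - θ)) := fun φ => by ring
    simp_rw [this]
    rw [intervalIntegral.integral_const_mul, kernel_fourier_shift h0 h1]
    ring
  · intro k
    exact ((continuous_const.mul (Real.continuous_cos.comp (continuous_const.mul
      continuous_id))).mul ((kernel_continuous h0 h1).comp (continuous_id.sub continuous_const)))
  · intro k x
    rw [abs_mul, abs_mul]
    have hak : |a k| = a k := abs_of_nonneg (ha0 k)
    calc |a k| * |Real.cos (n k * x)| * |poissonKernelDisc r (x - θ)|
        ≤ |a k| * 1 * M := by
          gcongr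
          · exact Real.abs_cos_le_one _
          · exact kernel_bound h0 h1 _
      _ = a k * M := by rw [hak]; ring

lemma coeff_tsum {b : ℕ → ℝ} (hb : Summable b) {n : ℕ → ℕ} (hinj : Function.Injective n)
    (hn0 : ∀ j, n j ≠ 0) (k : ℕ) :
    ∫ θ in (-π)..π, (∑' j, b j * Real.cos (n j * θ)) * Real.cos (n k * θ) = π * b k := by
  have h1' : ∀ θ : ℝ, (∑' j, b j * Real.cos (n j * θ)) * Real.cos (n k * θ)
      = ∑' j, b j * Real.cos (n j * θ) * Real.cos (n k * θ) := fun θ => tsum_mul_right.symm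
  simp_rw [h1']
  have hswap := interval_integral_tsum
    (g := fun j θ => b j * Real.cos (n j * θ) * Real.cos (n k * θ))
    (u := fun j => |b j|) ?_ hb.abs ?_
  · rw [hswap]
    have hterm : ∀ j : ℕ, ∫ θ in (-π)..π, b j * Real.cos (n j * θ) * Real.cos (n k * θ)
        = b j * (if n j = n k then π else 0) := by
      intro j
      have : ∀ θ : ℝ, b j * Real.cos (n j * θ) * Real.cos (n k * θ)
          = b j * (Real.cos (n j * θ) * Real.cos (n k * θ)) := fun θ => by ring
      simp_rw [this]
      rw [intervalIntegral.integral_const_mul, integral_cos_mul_cos (hn0 j) (hn0 k)]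
    simp_rw [hterm]
    rw [tsum_eq_single k]
    · rw [if_pos rfl]; ring
    · intro j hj
      rw [if_neg (fun h => hj (hinj h))]
      ring
  · intro j
    exact (continuous_const.mul (Real.continuous_cos.comp (continuous_const.mul
      continuous_id))).mul (Real.continuous_cos.comp (continuous_const.mul continuous_id))
  · intro j x
    rw [abs_mul, abs_mul]
    calc |b j| * |Real.cos (n j * x)| * |Real.cos (n k * x)| ≤ |b j| * 1 * 1 := by
          gcongr
          · exact Real.abs_cos_le_one _
          · exact Real.abs_cos_le_one _
      _ = |b j| := by ring

instance : IsFiniteMeasure (volume.restrict (Ioc (-π) π)) :=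
  ⟨by rw [Measure.restrict_apply_univ]; exact measure_Ioc_lt_top⟩

instance : IsFiniteMeasure (volume.restrict (Ioc (-π) π)) :=
  ⟨by rw [Measure.restrict_apply_univ]; exact measure_Ioc_lt_top⟩

lemma lp_lower {p : ℝ} (hp : 1 ≤ p) {G : ℝ → ℝ} (hG : Continuous G) {C : ℝ}
    (hC : ∀ x, |G x| ≤ C) (c : ℝ) :
    |∫ θ in (-π)..π, G θ * Real.cos (c * θ)| * (2 * π) ^ (1 / p - 1) ≤ lpNorm p G := by
  have hpi := pi_pos
  have hle : (-π : ℝ) ≤ π := by linarith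
  have hGint : IntervalIntegrable G volume (-π) π := hG.intervalIntegrable _ _
  have hGabs : IntervalIntegrable (fun x => |G x|) volume (-π) π := hG.abs.intervalIntegrable _ _
  have hGcos : IntervalIntegrable (fun x => G x * Real.cos (c * x)) volume (-π) π :=
    (hG.mul (Real.continuous_cos.comp (continuous_const.mul continuous_id))).intervalIntegrable _ _
  have h1 : |∫ θ in (-π)..π, G θ * Real.cos (c * θ)| ≤ ∫ θ in (-π)..π, |G θ| := by
    calc |∫ θ in (-π)..π, G θ * Real.cos (c * θ)|
        ≤ ∫ θ in (-π)..π, |G θ * Real.cos (c * θ)| :=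
          intervalIntegral.abs_integral_le_integral_abs hle
      _ ≤ ∫ θ in (-π)..π, |G θ| := by
          apply intervalIntegral.integral_mono_on hle (hGcos.abs) hGabs
          intro x _
          rw [abs_mul]
          calc |G x| * |Real.cos (c * x)| ≤ |G x| * 1 :=
                mul_le_mul_of_nonneg_left (Real.abs_cos_le_one _) (abs_nonneg _)
            _ = |G x| := mul_one _
  have h2 : ∫ θ in (-π)..π, |G θ| ≤ (2 * π) ^ (1 - 1 / p) * lpNorm p G := by
    rcases eq_or_lt_of_le hp with hp1 | hlt
    · rw [← hp1]
      simp only [_root_.lpNorm]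
      norm_num
    · have hpq := Real.HolderConjugate.conjExponent hlt
      set q := Real.conjExponent p with hq_def
      have hppos : (0:ℝ) < p := by linarith
      have hmemf : MemLp (fun θ => |G θ|) (ENNReal.ofReal p)
          (volume.restrict (Ioc (-π) π)) := by
        apply MemLp.of_bound hG.abs.aestronglyMeasurable C
        exact Eventually.of_forall fun x => by rw [Real.norm_eq_abs, abs_abs]; exact hC x
      have hmem1 : MemLp (fun _ : ℝ => (1:ℝ)) (ENNReal.ofReal q)
          (volume.restrict (Ioc (-π) π)) := memLp_const 1
      have hH := MeasureTheory.integral_mul_le_Lp_mul_Lq_of_nonneg hpq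
        (Eventually.of_forall fun x => abs_nonneg (G x))
        (Eventually.of_forall fun _ => zero_le_one) hmemf hmem1
      simp only [mul_one, Real.one_rpow] at hH
      have hvol : ∫ (_ : ℝ) in Ioc (-π) π, (1:ℝ) = 2 * π := by
        rw [MeasureTheory.setIntegral_const, measureReal_def, Real.volume_Ioc, smul_eq_mul, mul_one,
          ENNReal.toReal_ofReal (by linarith)]
        ring
      rw [hvol] at hH
      have h1q : 1 / q = 1 - 1 / p := by
        have := hpq.inv_add_inv_eq_one
        rw [one_div, one_div]
        linarith
      rw [h1q] at hH
      rw [intervalIntegral.integral_of_le hle]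
      have hlp : lpNorm p G = (∫ θ in Ioc (-π) π, |G θ| ^ p) ^ (1 / p) := by
        rw [_root_.lpNorm, intervalIntegral.integral_of_le hle]
      rw [hlp, mul_comm]
      exact hH
  calc |∫ θ in (-π)..π, G θ * Real.cos (c * θ)| * (2 * π) ^ (1 / p - 1)
      ≤ ((2 * π) ^ (1 - 1 / p) * lpNorm p G) * (2 * π) ^ (1 / p - 1) := by
        apply mul_le_mul_of_nonneg_right (h1.trans h2) (Real.rpow_nonneg (by linarith) _)
    _ = lpNorm p G * ((2 * π) ^ (1 - 1 / p) * (2 * π) ^ (1 / p - 1)) := by ring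
    _ = lpNorm p G := by
        rw [← Real.rpow_add two_pi_pos]
        norm_num

/-- the `L^p` convergence of the Poisson integral to its boundary function
can be arbitrarily slow: for `1 ≤ p < ∞` and decreasing `A : [0,1) → (0,1/2)` with
`A(r) → 0` as `r → 1⁻`, there is a 2π-periodic `f ∈ L^p[-π,π]` with
`‖u_r - f‖_p ≥ A(r)` for all `0 ≤ r < 1`. -/
theorem lp_convergence_arbitrarily_slow (p : ℝ) (hp : 1 ≤ p) (A : ℝ → ℝ)
    (hA : ∀ r ∈ Set.Ico (0 : ℝ) 1, A r ∈ Set.Ioo (0 : ℝ) (1 / 2))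
    (hmono : AntitoneOn A (Set.Ico 0 1))
    (hlim : Tendsto A (𝓝[<] 1) (𝓝 0)) :
    ∃ f : ℝ → ℝ, Function.Periodic f (2 * π) ∧
      MemLp f (ENNReal.ofReal p) (volume.restrict (Set.Icc (-π) π)) ∧
      ∀ r ∈ Set.Ico (0 : ℝ) 1,
        A r ≤ lpNorm p (fun θ => poissonIntegral f r θ - f θ) := by
  have hpi := pi_pos
  have hppos : (0:ℝ) < p := by linarith
  -- Step 1: thresholds t k
  have hseq : ∀ k : ℕ, ∃ t : ℝ, 0 ≤ t ∧ t < 1 ∧ 1 - 1/(k+1) ≤ t ∧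
      ∀ x, t ≤ x → x < 1 → A x ≤ (1/2)^(k+2) := by
    intro k
    have hev : ∀ᶠ x in 𝓝[<] (1:ℝ), A x < (1/2)^(k+2) :=
      hlim.eventually_lt_const (by positivity)
    obtain ⟨l, hl, hsub⟩ := (mem_nhdsLT_iff_exists_Ioo_subset).mp hev
    refine ⟨max (max ((l+1)/2) (1 - 1/(k+1))) 0, le_max_right _ _, ?_, ?_, ?_⟩
    · rw [max_lt_iff, max_lt_iff]
      have hl1 : l < 1 := hl
      refine ⟨⟨by linarith, ?_⟩, by norm_num⟩
      have : (0:ℝ) < 1/(k+1) := by positivity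
      linarith
    · exact le_max_of_le_left (le_max_right _ _)
    · intro x hx hx1
      have hxl : l < x := by
        have h1 : (l+1)/2 ≤ x := le_trans (le_max_of_le_left (le_max_left _ _)) hx
        have hl1 : l < 1 := hl
        linarith
      exact (hsub ⟨hxl, hx1⟩).le
  choose t ht0 ht1 htlb htA using hseq
  -- Step 2: exponents m, n
  have hmex : ∀ k, ∃ m : ℕ, 1 ≤ m ∧ t k ^ m ≤ 1/2 := by
    intro k
    obtain ⟨m, hm⟩ := exists_pow_lt_of_lt_one one_half_pos (ht1 k)
    exact ⟨m + 1, Nat.le_add_left 1 m,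
      (pow_le_pow_of_le_one (ht0 k) (ht1 k).le (Nat.le_succ m)).trans hm.le⟩
  choose m hm1 hm2 using hmex
  set n : ℕ → ℕ := fun k => k + (Finset.range (k+1)).sup m with hn_def
  have hn_ge : ∀ k, m k ≤ n k := by
    intro k
    have : m k ≤ (Finset.range (k+1)).sup m :=
      Finset.le_sup (Finset.mem_range.mpr (by omega))
    simp only [hn_def]
    omega
  have hnmono : StrictMono n := by
    apply strictMono_nat_of_lt_succ
    intro k
    have : (Finset.range (k+1)).sup m ≤ (Finset.range (k+1+1)).sup m :=
      Finset.sup_mono (Finset.range_subset_range.mpr (by omega))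
    simp only [hn_def]
    omega
  have hn0 : ∀ k, n k ≠ 0 := fun k => by have := hm1 k; have := hn_ge k; omega
  have hn_half : ∀ k, t k ^ (n k) ≤ 1/2 := fun k =>
    (pow_le_pow_of_le_one (ht0 k) (ht1 k).le (hn_ge k)).trans (hm2 k)
  -- Step 3: coefficients
  set a : ℕ → ℝ := fun k => 2 * (1/2)^k with ha_def
  have ha0 : ∀ k, 0 ≤ a k := fun k => by positivity
  have ha_sum : Summable a :=
    (summable_geometric_of_lt_one (by norm_num) (by norm_num)).mul_left 2
  -- the function f
  set f : ℝ → ℝ := fun θ => ∑' k, a k * Real.cos (n k * θ) with hf_def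
  have hterm_cont : ∀ k, Continuous fun θ : ℝ => a k * Real.cos ((n k : ℝ) * θ) :=
    fun k => continuous_const.mul (Real.continuous_cos.comp (continuous_const.mul continuous_id))
  have hterm_bd : ∀ (k) (θ : ℝ), ‖a k * Real.cos ((n k : ℝ) * θ)‖ ≤ a k := by
    intro k θ
    rw [Real.norm_eq_abs, abs_mul, abs_of_nonneg (ha0 k)]
    calc a k * |Real.cos ((n k : ℝ) * θ)| ≤ a k * 1 :=
          mul_le_mul_of_nonneg_left (Real.abs_cos_le_one _) (ha0 k)
      _ = a k := mul_one _
  have hf_cont : Continuous f := continuous_tsum hterm_cont ha_sum hterm_bd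
  have hf_per : Function.Periodic f (2 * π) := by
    intro θ
    simp only [hf_def]
    apply tsum_congr
    intro k
    congr 1
    rw [show (n k : ℝ) * (θ + 2 * π) = (n k : ℝ) * θ + (n k : ℤ) * (2 * π) by push_cast; ring,
      Real.cos_add_int_mul_two_pi]
  have hf_bd : ∀ θ, |f θ| ≤ ∑' k, a k := by
    intro θ
    have hsn : Summable fun k => ‖a k * Real.cos ((n k : ℝ) * θ)‖ :=
      Summable.of_nonneg_of_le (fun k => norm_nonneg _) (fun k => hterm_bd k θ) ha_sum
    calc |f θ| ≤ ∑' k, ‖a k * Real.cos ((n k : ℝ) * θ)‖ := by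
          rw [← Real.norm_eq_abs]; exact norm_tsum_le_tsum_norm hsn
      _ ≤ ∑' k, a k := Summable.tsum_le_tsum (fun k => hterm_bd k θ) hsn ha_sum
  have hf_mem : MemLp f (ENNReal.ofReal p) (volume.restrict (Set.Icc (-π) π)) := by
    have : IsFiniteMeasure (volume.restrict (Set.Icc (-π) π)) :=
      ⟨by rw [Measure.restrict_apply_univ]; exact measure_Icc_lt_top⟩
    exact MemLp.of_bound hf_cont.aestronglyMeasurable (∑' k, a k)
      (Eventually.of_forall fun θ => by rw [Real.norm_eq_abs]; exact hf_bd θ)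
  refine ⟨f, hf_per, hf_mem, ?_⟩
  rintro r ⟨hr0, hr1⟩
  -- the difference function as a trigonometric series
  set b : ℕ → ℝ := fun j => a j * r ^ (n j) - a j with hb_def
  have hb_np : ∀ j, b j ≤ 0 ∧ a j * r ^ (n j) ≤ a j ∧ 0 ≤ a j * r ^ (n j) := by
    intro j
    have h1 : 0 ≤ r ^ (n j) := pow_nonneg hr0 _
    have h2 : r ^ (n j) ≤ 1 := pow_le_one₀ hr0 hr1.le
    have hup : a j * r ^ (n j) ≤ a j := by nlinarith [ha0 j]
    have hlo : 0 ≤ a j * r ^ (n j) := mul_nonneg (ha0 j) h1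
    refine ⟨?_, hup, hlo⟩
    simp only [hb_def]
    linarith
  have hb_abs : ∀ j, |b j| ≤ a j := by
    intro j
    obtain ⟨h1, h2, h3⟩ := hb_np j
    rw [abs_of_nonpos h1]
    simp only [hb_def]
    linarith
  have hb_sum : Summable b :=
    Summable.of_norm_bounded ha_sum (fun j => by rw [Real.norm_eq_abs]; exact hb_abs j)
  have hG_pt : ∀ θ, poissonIntegral f r θ - f θ
      = ∑' j, b j * Real.cos ((n j : ℝ) * θ) := by
    intro θ
    rw [hf_def]
    rw [poisson_tsum ha0 ha_sum n hr0 hr1 θ]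
    have hs1 : Summable fun k => a k * r ^ (n k) * Real.cos ((n k : ℝ) * θ) := by
      apply Summable.of_norm_bounded ha_sum
      intro k
      rw [Real.norm_eq_abs, abs_mul, abs_mul, abs_of_nonneg (ha0 k),
        abs_of_nonneg (pow_nonneg hr0 _)]
      calc a k * r ^ (n k) * |Real.cos ((n k : ℝ) * θ)| ≤ a k * 1 * 1 :=
            mul_le_mul (mul_le_mul_of_nonneg_left (pow_le_one₀ hr0 hr1.le) (ha0 k))
              (Real.abs_cos_le_one _) (abs_nonneg _)
              (by nlinarith [ha0 k])
        _ = a k := by ring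
    have hs2 : Summable fun k => a k * Real.cos ((n k : ℝ) * θ) :=
      Summable.of_norm_bounded ha_sum (fun k => hterm_bd k θ)
    rw [← Summable.tsum_sub hs1 hs2]
    apply tsum_congr
    intro j
    rw [hb_def]
    ring
  have hG_eq : (fun θ => poissonIntegral f r θ - f θ)
      = fun θ => ∑' j, b j * Real.cos ((n j : ℝ) * θ) := funext hG_pt
  -- bound and continuity of G
  have hG_cont : Continuous (fun θ => poissonIntegral f r θ - f θ) := by
    rw [hG_eq]
    apply continuous_tsum
      (fun j => continuous_const.mul (Real.continuous_cos.comp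
        (continuous_const.mul continuous_id))) ha_sum
    intro j θ
    change ‖b j * Real.cos ((n j : ℝ) * θ)‖ ≤ a j
    rw [Real.norm_eq_abs, abs_mul]
    calc |b j| * |Real.cos ((n j : ℝ) * θ)| ≤ a j * 1 :=
          mul_le_mul (hb_abs j) (Real.abs_cos_le_one _) (abs_nonneg _) (ha0 j)
      _ = a j := mul_one _
  have hG_bd : ∀ θ, |poissonIntegral f r θ - f θ| ≤ ∑' k, a k := by
    intro θ
    rw [hG_pt θ]
    have hsn : Summable fun j => ‖b j * Real.cos ((n j : ℝ) * θ)‖ := by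
      apply Summable.of_nonneg_of_le (fun j => norm_nonneg _) ?_ ha_sum
      intro j
      rw [Real.norm_eq_abs, abs_mul]
      calc |b j| * |Real.cos ((n j : ℝ) * θ)| ≤ a j * 1 :=
            mul_le_mul (hb_abs j) (Real.abs_cos_le_one _) (abs_nonneg _) (ha0 j)
        _ = a j := mul_one _
    calc |∑' j, b j * Real.cos ((n j : ℝ) * θ)| ≤ ∑' j, ‖b j * Real.cos ((n j : ℝ) * θ)‖ := by
          rw [← Real.norm_eq_abs]; exact norm_tsum_le_tsum_norm hsn
      _ ≤ ∑' k, a k := by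
          apply Summable.tsum_le_tsum ?_ hsn ha_sum
          intro j
          rw [Real.norm_eq_abs, abs_mul]
          calc |b j| * |Real.cos ((n j : ℝ) * θ)| ≤ a j * 1 :=
                mul_le_mul (hb_abs j) (Real.abs_cos_le_one _) (abs_nonneg _) (ha0 j)
            _ = a j := mul_one _
  -- find the index k
  have hex : ∃ k : ℕ, r ≤ t k := by
    obtain ⟨k, hk⟩ := exists_nat_one_div_lt (show (0:ℝ) < 1 - r by linarith)
    exact ⟨k, le_trans (by linarith [hk]) (htlb k)⟩
  set k := Nat.find hex with hk_def
  have hk : r ≤ t k := Nat.find_spec hex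
  -- A r ≤ a k / 4
  have hAr : A r ≤ a k / 4 := by
    rcases Nat.eq_zero_or_pos k with hk0 | hkpos
    · have h12 := (hA r ⟨hr0, hr1⟩).2
      rw [hk0]
      simp only [ha_def]
      norm_num
      linarith
    · obtain ⟨j, hkj⟩ : ∃ j, k = j + 1 := ⟨k - 1, by omega⟩
      have hjk : j < Nat.find hex := by rw [← hk_def]; omega
      have hnot : ¬ r ≤ t j := Nat.find_min hex hjk
      push_neg at hnot
      have hAub : A r ≤ (1/2 : ℝ)^(j+2) := htA j r hnot.le hr1
      have hak : a k / 4 = (1/2:ℝ)^(j+2) := by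
        rw [hkj]
        simp only [ha_def]
        rw [pow_succ]
        ring
      rw [hak]
      exact hAub
  -- the coefficient
  have hcoef : ∫ θ in (-π)..π, (poissonIntegral f r θ - f θ) * Real.cos ((n k : ℝ) * θ)
      = π * b k := by
    have hct := coeff_tsum hb_sum (fun i j hij => hnmono.injective hij) hn0 k
    have hfun : ∀ θ : ℝ, (poissonIntegral f r θ - f θ) * Real.cos ((n k : ℝ) * θ)
        = (∑' j, b j * Real.cos ((n j : ℝ) * θ)) * Real.cos ((n k : ℝ) * θ) := fun θ => by
      rw [hG_pt θ]
    simp_rw [hfun]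
    exact hct
  have hrn : r ^ (n k) ≤ 1/2 :=
    le_trans (pow_le_pow_left₀ hr0 hk (n k)) (hn_half k)
  have hbk : |π * b k| = π * (a k * (1 - r ^ (n k))) := by
    rw [abs_mul, abs_of_nonneg hpi.le, hb_def]
    congr 1
    rw [abs_of_nonpos (hb_np k).1]
    simp only [hb_def]
    ring
  -- final chain
  have hmain := lp_lower hp hG_cont hG_bd ((n k : ℝ))
  rw [hcoef, hbk] at hmain
  refine le_trans ?_ hmain
  have h2pi : (2*π) ^ ((1:ℝ)/p - 1) ≥ (2*π)⁻¹ := by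
    rw [show ((2*π))⁻¹ = (2*π) ^ (-1 : ℝ) by rw [Real.rpow_neg_one]]
    apply Real.rpow_le_rpow_of_exponent_le (by nlinarith [Real.pi_gt_three])
    have : 0 < 1/p := by positivity
    linarith
  calc A r ≤ a k / 4 := hAr
    _ = (π * (a k * (1/2))) * (2*π)⁻¹ := by field_simp; ring
    _ ≤ (π * (a k * (1 - r ^ (n k)))) * (2*π) ^ ((1:ℝ)/p - 1) := by
        apply mul_le_mul ?_ h2pi (by positivity) ?_
        · apply mul_le_mul_of_nonneg_left ?_ hpi.le
          apply mul_le_mul_of_nonneg_left ?_ (ha0 k)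
          linarith
        · apply mul_nonneg hpi.le (mul_nonneg (ha0 k) (by linarith))
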